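/- Let G be a finite simple graph and let X be the number of crossings of a uniformly random embedding of G on points in convex position. Then E[X] = m_2(G)/3, where m_2(G) is the number of 2-matchings of G. -/

import Mathlib

open Finset

namespace RandomCrossings

/-- `z` lies strictly between `x` and `y`. -/
def Btw {n : ℕ} (x y z : Fin n) : Prop := min x y < z ∧ z < max x y

instance {n : ℕ} (x y z : Fin n) : Decidable (Btw x y z) :=
  inferInstanceAs (Decidable (_ ∧ _))

/-- The pair of edges `s` forms a crossing under the embedding `π`:
there is a labelling of `s` as `{{a,b},{c,d}}` such that exactly one of
`π c`, `π d` lies strictly between `π a` and `π b`. -/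
def IsCrossing {n : ℕ} (π : Equiv.Perm (Fin n)) (s : Finset (Sym2 (Fin n))) : Prop :=
  ∃ a b c d : Fin n,
    s = {Sym2.mk a b, Sym2.mk c d} ∧
      Xor' (Btw (π a) (π b) (π c)) (Btw (π a) (π b) (π d))

instance {n : ℕ} (π : Equiv.Perm (Fin n)) (s : Finset (Sym2 (Fin n))) :
    Decidable (IsCrossing π s) :=
  by unfold IsCrossing Xor'; infer_instance

/-- The set of `r`-matchings of `G`: sets of `r` pairwise vertex-disjoint edges. -/
def matchings {n : ℕ} (G : SimpleGraph (Fin n)) [DecidableRel G.Adj] (r : ℕ) :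
    Finset (Finset (Sym2 (Fin n))) :=
  (G.edgeFinset.powersetCard r).filter
    (fun s => ∀ e ∈ s, ∀ f ∈ s, e ≠ f → ∀ v : Fin n, ¬(v ∈ e ∧ v ∈ f))

/-- `mMatch G r` is the number of `r`-matchings of `G`. -/
def mMatch {n : ℕ} (G : SimpleGraph (Fin n)) [DecidableRel G.Adj] (r : ℕ) : ℕ :=
  (matchings G r).card

/-- The number of crossings of the embedding of `G` given by the permutation `π`. -/
def crossingNumber {n : ℕ} (G : SimpleGraph (Fin n)) [DecidableRel G.Adj]
    (π : Equiv.Perm (Fin n)) : ℕ :=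
  ((matchings G 2).filter (fun s => IsCrossing π s)).card

/-- Probability of an event under a uniformly random permutation of `Fin n`. -/
noncomputable def prob {n : ℕ} (p : Equiv.Perm (Fin n) → Prop) : ℝ := by
  classical
  exact ((Finset.univ.filter p).card : ℝ) / (Fintype.card (Equiv.Perm (Fin n)) : ℝ)

/-- Expectation of a real random variable of a uniformly random permutation of `Fin n`. -/
noncomputable def expect {n : ℕ} (f : Equiv.Perm (Fin n) → ℝ) : ℝ :=
  (∑ π : Equiv.Perm (Fin n), f π) / (Fintype.card (Equiv.Perm (Fin n)) : ℝ)

/-- The mean number of crossings of a uniformly random embedding of `G`. -/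
noncomputable def meanX {n : ℕ} (G : SimpleGraph (Fin n)) [DecidableRel G.Adj] : ℝ :=
  expect (fun π => (crossingNumber G π : ℝ))

/-- The variance of the number of crossings of a uniformly random embedding of `G`. -/
noncomputable def varX {n : ℕ} (G : SimpleGraph (Fin n)) [DecidableRel G.Adj] : ℝ :=
  expect (fun π => ((crossingNumber G π : ℝ) - meanX G) ^ 2)

/-- The standard normal cumulative distribution function. -/
noncomputable def Phi (z : ℝ) : ℝ :=
  ((ProbabilityTheory.gaussianReal 0 1) (Set.Iic z)).toReal

/-- Kolmogorov distance between a random variable of a uniform permutation and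
a standard Gaussian. -/
noncomputable def dKol {n : ℕ} (W : Equiv.Perm (Fin n) → ℝ) : ℝ :=
  ⨆ z : ℝ, |prob (fun π => W π ≤ z) - Phi z|



lemma val_min {n : ℕ} (x y : Fin n) : (min x y).val = min x.val y.val := by
  rcases le_total x y with h | h
  · rw [min_eq_left h, min_eq_left (Fin.le_def.mp h)]
  · rw [min_eq_right h, min_eq_right (Fin.le_def.mp h)]

lemma val_max {n : ℕ} (x y : Fin n) : (max x y).val = max x.val y.val := by
  rcases le_total x y with h | h
  · rw [max_eq_right h, max_eq_right (Fin.le_def.mp h)]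
  · rw [max_eq_left h, max_eq_left (Fin.le_def.mp h)]

def NC (a b c d : ℕ) : Prop :=
  Xor' (min a b < c ∧ c < max a b) (min a b < d ∧ d < max a b)

lemma nc_exactly_one (a b c d : ℕ) (hab : a ≠ b) (hac : a ≠ c) (had : a ≠ d)
    (hbc : b ≠ c) (hbd : b ≠ d) (hcd : c ≠ d) :
    (NC a b c d ∧ ¬ NC a c d b ∧ ¬ NC a d b c) ∨
    (¬ NC a b c d ∧ NC a c d b ∧ ¬ NC a d b c) ∨
    (¬ NC a b c d ∧ ¬ NC a c d b ∧ NC a d b c) := by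
  simp only [NC, Xor', Xor]
  omega

lemma btw_iff {n : ℕ} (x y z : Fin n) :
    Btw x y z ↔ (min x.val y.val < z.val ∧ z.val < max x.val y.val) := by
  rw [Btw, Fin.lt_def, Fin.lt_def, val_min, val_max]

lemma xor_iff_nc {n : ℕ} (w x y z : Fin n) :
    Xor' (Btw w x y) (Btw w x z) ↔ NC w.val x.val y.val z.val := by
  simp only [Xor', NC, btw_iff]

lemma isCrossing_iff {n : ℕ} (π : Equiv.Perm (Fin n)) (a b c d : Fin n)
    (hab : a ≠ b) (hac : a ≠ c) (had : a ≠ d) (hbc : b ≠ c) (hbd : b ≠ d) (hcd : c ≠ d) :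
    IsCrossing π {Sym2.mk a b, Sym2.mk c d} ↔
      NC (π a).val (π b).val (π c).val (π d).val := by
  have D : ∀ x y : Fin n, x ≠ y → (π x).val ≠ (π y).val := by
    intro x y h hv
    exact h (π.injective (Fin.val_injective hv))
  constructor
  · rintro ⟨a', b', c', d', hs, hx⟩
    have hne : Sym2.mk a b ≠ Sym2.mk c d := by
      rw [Ne, Sym2.eq_iff]
      push_neg
      exact ⟨fun h => absurd h hac, fun h => absurd h had⟩
    have hmem1 : Sym2.mk a' b' = Sym2.mk a b ∨ Sym2.mk a' b' = Sym2.mk c d := by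
      have : Sym2.mk a' b' ∈ ({Sym2.mk a b, Sym2.mk c d} : Finset (Sym2 (Fin n))) := by
        rw [hs]; simp
      simpa using this
    have hmem2 : Sym2.mk c' d' = Sym2.mk a b ∨ Sym2.mk c' d' = Sym2.mk c d := by
      have : Sym2.mk c' d' ∈ ({Sym2.mk a b, Sym2.mk c d} : Finset (Sym2 (Fin n))) := by
        rw [hs]; simp
      simpa using this
    have hmem3 : Sym2.mk a b = Sym2.mk a' b' ∨ Sym2.mk a b = Sym2.mk c' d' := by
      have : Sym2.mk a b ∈ ({Sym2.mk a' b', Sym2.mk c' d'} : Finset (Sym2 (Fin n))) := by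
        rw [← hs]; simp
      simpa using this
    have hmem4 : Sym2.mk c d = Sym2.mk a' b' ∨ Sym2.mk c d = Sym2.mk c' d' := by
      have : Sym2.mk c d ∈ ({Sym2.mk a' b', Sym2.mk c' d'} : Finset (Sym2 (Fin n))) := by
        rw [← hs]; simp
      simpa using this
    have hcase : (Sym2.mk a' b' = Sym2.mk a b ∧ Sym2.mk c' d' = Sym2.mk c d) ∨
        (Sym2.mk a' b' = Sym2.mk c d ∧ Sym2.mk c' d' = Sym2.mk a b) := by
      rcases hmem1 with h1 | h1 <;> rcases hmem2 with h2 | h2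
      · exfalso
        rcases hmem4 with h4 | h4
        · exact hne (h4.trans h1).symm
        · exact hne (h4.trans h2).symm
      · exact Or.inl ⟨h1, h2⟩
      · exact Or.inr ⟨h1, h2⟩
      · exfalso
        rcases hmem3 with h3 | h3
        · exact hne (h3.trans h1)
        · exact hne (h3.trans h2)
    have hD : (π a).val ≠ (π b).val ∧ (π a).val ≠ (π c).val ∧ (π a).val ≠ (π d).val ∧
        (π b).val ≠ (π c).val ∧ (π b).val ≠ (π d).val ∧ (π c).val ≠ (π d).val :=
      ⟨D a b hab, D a c hac, D a d had, D b c hbc, D b d hbd, D c d hcd⟩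
    obtain ⟨h1, h2, h3, h4, h5, h6⟩ := hD
    rw [xor_iff_nc] at hx
    rcases hcase with ⟨he, hf⟩ | ⟨he, hf⟩ <;>
      rcases Sym2.eq_iff.mp he with ⟨rfl, rfl⟩ | ⟨rfl, rfl⟩ <;>
      rcases Sym2.eq_iff.mp hf with ⟨rfl, rfl⟩ | ⟨rfl, rfl⟩ <;>
      revert hx <;> simp only [NC, Xor', Xor] <;> omega
  · intro h
    exact ⟨a, b, c, d, rfl, (xor_iff_nc _ _ _ _).mpr h⟩


lemma exists_labels {n : ℕ} (G : SimpleGraph (Fin n)) [DecidableRel G.Adj]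
    {s : Finset (Sym2 (Fin n))} (hs : s ∈ matchings G 2) :
    ∃ a b c d : Fin n, s = {Sym2.mk a b, Sym2.mk c d} ∧
      a ≠ b ∧ a ≠ c ∧ a ≠ d ∧ b ≠ c ∧ b ≠ d ∧ c ≠ d := by
  simp only [matchings, mem_filter, mem_powersetCard] at hs
  obtain ⟨⟨hsub, hcard⟩, hdisj⟩ := hs
  obtain ⟨e, f, hef, rfl⟩ := Finset.card_eq_two.mp hcard
  have he : e ∈ G.edgeSet := by
    rw [← SimpleGraph.mem_edgeFinset]; exact hsub (by simp)
  have hf : f ∈ G.edgeSet := by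
    rw [← SimpleGraph.mem_edgeFinset]; exact hsub (by simp)
  induction e using Sym2.ind with | _ a b =>
  induction f using Sym2.ind with | _ c d =>
  have hab : a ≠ b := fun h => G.not_isDiag_of_mem_edgeSet he (Sym2.mk_isDiag_iff.mpr h)
  have hcd : c ≠ d := fun h => G.not_isDiag_of_mem_edgeSet hf (Sym2.mk_isDiag_iff.mpr h)
  have key : ∀ v : Fin n, ¬(v ∈ Sym2.mk a b ∧ v ∈ Sym2.mk c d) :=
    fun v => hdisj _ (by simp) _ (by simp) hef v
  refine ⟨a, b, c, d, rfl, hab, ?_, ?_, ?_, ?_, hcd⟩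
  · intro h; exact key a ⟨by simp, by simp [h]⟩
  · intro h; exact key a ⟨by simp, by simp [h]⟩
  · intro h; exact key b ⟨by simp, by simp [h]⟩
  · intro h; exact key b ⟨by simp, by simp [h]⟩

lemma count_third {n : ℕ} (a b c d : Fin n)
    (hab : a ≠ b) (hac : a ≠ c) (had : a ≠ d) (hbc : b ≠ c) (hbd : b ≠ d) (hcd : c ≠ d) :
    3 * (univ.filter (fun π : Equiv.Perm (Fin n) =>
        IsCrossing π {Sym2.mk a b, Sym2.mk c d})).card
      = Fintype.card (Equiv.Perm (Fin n)) := by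
  classical
  set s : Finset (Sym2 (Fin n)) := {Sym2.mk a b, Sym2.mk c d} with hs
  set σ : Equiv.Perm (Fin n) := Equiv.swap b c * Equiv.swap c d with hσ
  have hσa : σ a = a := by
    simp [hσ, Equiv.Perm.mul_apply,
      Equiv.swap_apply_of_ne_of_ne hac had, Equiv.swap_apply_of_ne_of_ne hab hac]
  have hσb : σ b = c := by
    simp [hσ, Equiv.Perm.mul_apply, Equiv.swap_apply_of_ne_of_ne hbc hbd]
  have hσc : σ c = d := by
    simp [hσ, Equiv.Perm.mul_apply, Equiv.swap_apply_of_ne_of_ne hbd.symm hcd.symm]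
  have hσd : σ d = b := by
    simp [hσ, Equiv.Perm.mul_apply]
  have key : ∀ π : Equiv.Perm (Fin n),
      (if IsCrossing π s then (1:ℕ) else 0) + (if IsCrossing (π * σ) s then 1 else 0)
        + (if IsCrossing (π * σ * σ) s then 1 else 0) = 1 := by
    intro π
    have D : ∀ x y : Fin n, x ≠ y → (π x).val ≠ (π y).val := by
      intro x y h hv
      exact h (π.injective (Fin.val_injective hv))
    have h1 : IsCrossing π s ↔ NC (π a).val (π b).val (π c).val (π d).val :=
      isCrossing_iff π a b c d hab hac had hbc hbd hcd
    have h2 : IsCrossing (π * σ) s ↔ NC (π a).val (π c).val (π d).val (π b).val := by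
      have := isCrossing_iff (π * σ) a b c d hab hac had hbc hbd hcd
      simpa [Equiv.Perm.mul_apply, hσa, hσb, hσc, hσd] using this
    have h3 : IsCrossing (π * σ * σ) s ↔ NC (π a).val (π d).val (π b).val (π c).val := by
      have := isCrossing_iff (π * σ * σ) a b c d hab hac had hbc hbd hcd
      simpa [Equiv.Perm.mul_apply, hσa, hσb, hσc, hσd] using this
    rcases nc_exactly_one (π a).val (π b).val (π c).val (π d).val
      (D a b hab) (D a c hac) (D a d had) (D b c hbc) (D b d hbd) (D c d hcd) with
      ⟨p, q, r⟩ | ⟨p, q, r⟩ | ⟨p, q, r⟩ <;> simp [h1, h2, h3, p, q, r]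
  have reidx1 : ∑ π : Equiv.Perm (Fin n), (if IsCrossing (π * σ) s then (1:ℕ) else 0)
      = ∑ π : Equiv.Perm (Fin n), (if IsCrossing π s then 1 else 0) :=
    Equiv.sum_comp (Equiv.mulRight σ) (fun π => if IsCrossing π s then (1:ℕ) else 0)
  have reidx2 : ∑ π : Equiv.Perm (Fin n), (if IsCrossing (π * σ * σ) s then (1:ℕ) else 0)
      = ∑ π : Equiv.Perm (Fin n), (if IsCrossing π s then 1 else 0) := by
    have := Equiv.sum_comp (Equiv.mulRight (σ * σ))
      (fun π => if IsCrossing π s then (1:ℕ) else 0)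
    simpa [mul_assoc] using this
  have hcardsum : Fintype.card (Equiv.Perm (Fin n)) = ∑ π : Equiv.Perm (Fin n), (1:ℕ) := by
    simp
  rw [Finset.card_filter, hcardsum]
  calc 3 * ∑ π : Equiv.Perm (Fin n), (if IsCrossing π s then (1:ℕ) else 0)
      = ∑ π : Equiv.Perm (Fin n), ((if IsCrossing π s then (1:ℕ) else 0)
          + (if IsCrossing (π * σ) s then 1 else 0)
          + (if IsCrossing (π * σ * σ) s then 1 else 0)) := by
        rw [Finset.sum_add_distrib, Finset.sum_add_distrib, reidx1, reidx2]; ring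
    _ = ∑ π : Equiv.Perm (Fin n), (1:ℕ) := Finset.sum_congr rfl (fun π _ => key π)

/-- The expected number of crossings of a uniformly random embedding of `G`
equals one third of the number of 2-matchings of `G`. -/
theorem mean_crossings (n : ℕ) (G : SimpleGraph (Fin n)) [DecidableRel G.Adj] :
    meanX G = (mMatch G 2 : ℝ) / 3 := by
  classical
  have hN : ((Fintype.card (Equiv.Perm (Fin n)) : ℝ)) ≠ 0 := by
    exact_mod_cast Fintype.card_pos.ne'
  have hswap : ∑ π : Equiv.Perm (Fin n), ((crossingNumber G π : ℝ))
      = ∑ s ∈ matchings G 2,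
          ∑ π : Equiv.Perm (Fin n), (if IsCrossing π s then (1:ℝ) else 0) := by
    rw [Finset.sum_comm]
    refine Finset.sum_congr rfl fun π _ => ?_
    rw [crossingNumber, Finset.card_filter]
    push_cast
    rfl
  have hinner : ∀ s ∈ matchings G 2,
      ∑ π : Equiv.Perm (Fin n), (if IsCrossing π s then (1:ℝ) else 0)
        = (Fintype.card (Equiv.Perm (Fin n)) : ℝ) / 3 := by
    intro s hs
    obtain ⟨a, b, c, d, rfl, hab, hac, had, hbc, hbd, hcd⟩ := exists_labels G hs
    have h3 := count_third a b c d hab hac had hbc hbd hcd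
    have : ∑ π : Equiv.Perm (Fin n),
        (if IsCrossing π {Sym2.mk a b, Sym2.mk c d} then (1:ℝ) else 0)
        = ((univ.filter (fun π : Equiv.Perm (Fin n) =>
            IsCrossing π {Sym2.mk a b, Sym2.mk c d})).card : ℝ) := by
      rw [Finset.card_filter]
      push_cast
      rfl
    rw [this]
    have h3' : 3 * ((univ.filter (fun π : Equiv.Perm (Fin n) =>
        IsCrossing π {Sym2.mk a b, Sym2.mk c d})).card : ℝ)
        = (Fintype.card (Equiv.Perm (Fin n)) : ℝ) := by exact_mod_cast congrArg Nat.cast h3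
    linarith
  rw [meanX, expect, hswap, Finset.sum_congr rfl hinner, Finset.sum_const, ← mMatch]
  field_simp
  ring

end RandomCrossings
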